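/- arXiv:math/0601658 — 5 statements merged into one kernel-verified Lean document; each statement's English description precedes it below -/
import Mathlib

section
/- Let p: ℝ × ℝ → ℝⁿ be continuous, continuously differentiable in its first argument, and let τ > 0. Then for all t ∈ ℝ, the derivative with respect to t of ∫_{t-τ}^t ∫_s^t p(t,l) dl ds equals τ·p(t,t) − ∫_{t-τ}^t p(t,l) dl + ∫_{t-τ}^t ∫_s^t (∂p/∂t)(t,l) dl ds. -/
open MeasureTheory intervalIntegral Set Metric Asymptotics Filter

variable {E : Type*} [NormedAddCommGroup E] [NormedSpace ℝ E] [CompleteSpace E]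

/-- Differentiation under the interval integral with fixed endpoints,
under global continuity hypotheses. -/
lemma paramDeriv (f df : ℝ × ℝ → E) (hf : Continuous f) (hdf : Continuous df)
    (hd : ∀ x s : ℝ, HasDerivAt (fun x' => f (x', s)) (df (x, s)) x)
    (u v x₀ : ℝ) :
    HasDerivAt (fun x => ∫ s in u..v, f (x, s)) (∫ s in u..v, df (x₀, s)) x₀ := by
  obtain ⟨C, hC⟩ := ((isCompact_closedBall x₀ 1).prod
    isCompact_uIcc).exists_bound_of_continuousOn hdf.continuousOn
  have key := intervalIntegral.hasDerivAt_integral_of_dominated_loc_of_deriv_le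
    (μ := volume) (F := fun x s => f (x, s)) (F' := fun x s => df (x, s))
    (bound := fun _ => C) (x₀ := x₀) (a := u) (b := v) (ball_mem_nhds x₀ one_pos)
    (Filter.Eventually.of_forall fun x =>
      (hf.comp (Continuous.prodMk_right x)).aestronglyMeasurable)
    ((hf.comp (Continuous.prodMk_right x₀)).intervalIntegrable u v)
    (hdf.comp (Continuous.prodMk_right x₀)).aestronglyMeasurable
    (ae_of_all _ fun s hs x hx =>
      hC (x, s) ⟨ball_subset_closedBall hx, uIoc_subset_uIcc hs⟩)
    intervalIntegrable_const
    (ae_of_all _ fun s _ x _ => hd x s)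
  exact key.2

/-- Continuity of a parametric primitive. -/
lemma primCont (f : ℝ × ℝ → E) (hf : Continuous f) (c : ℝ) :
    Continuous fun z : ℝ × ℝ => ∫ l in c..z.2, f (z.1, l) :=
  intervalIntegral.continuous_parametric_primitive_of_continuous
    (f := fun x l => f (x, l)) (hf.comp (continuous_fst.prodMk continuous_snd))

/-- Leibniz rule for `x ↦ ∫ s in a x..x, f (x, s)` where the lower endpoint is a
differentiable function of `x` and the upper endpoint is `x` itself. -/
lemma keyDeriv (f df : ℝ × ℝ → E) (hf : Continuous f) (hdf : Continuous df)
    (hd : ∀ x s : ℝ, HasDerivAt (fun x' => f (x', s)) (df (x, s)) x)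
    (a : ℝ → ℝ) (a' t : ℝ) (ha : HasDerivAt a a' t) :
    HasDerivAt (fun x => ∫ s in a x..x, f (x, s))
      (f (t, t) - a' • f (t, a t) + ∫ s in a t..t, df (t, s)) t := by
  have hcx : ∀ x : ℝ, Continuous fun s => f (x, s) :=
    fun x => hf.comp (Continuous.prodMk_right x)
  have hint : ∀ x u v : ℝ, IntervalIntegrable (fun s => f (x, s)) volume u v :=
    fun x u v => (hcx x).intervalIntegrable u v
  -- the three pieces
  set g₁ : ℝ → E := fun x => ∫ s in a x..x, f (t, s) with hg₁
  set g₂ : ℝ → E := fun x => ∫ s in a t..t, (f (x, s) - f (t, s)) with hg₂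
  set g₃ : ℝ → E := fun x => (∫ s in a x..a t, (f (x, s) - f (t, s)))
    + ∫ s in t..x, (f (x, s) - f (t, s)) with hg₃
  have hintd : ∀ x u v : ℝ,
      IntervalIntegrable (fun s => f (x, s) - f (t, s)) volume u v :=
    fun x u v => (hint x u v).sub (hint t u v)
  have hdecomp : ∀ x, (∫ s in a x..x, f (x, s)) = g₁ x + g₂ x + g₃ x := by
    intro x
    have h1 : (∫ s in a x..a t, (f (x, s) - f (t, s)))
        + (∫ s in a t..t, (f (x, s) - f (t, s)))
        + (∫ s in t..x, (f (x, s) - f (t, s)))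
        = ∫ s in a x..x, (f (x, s) - f (t, s)) := by
      rw [integral_add_adjacent_intervals (hintd x _ _) (hintd x _ _),
        integral_add_adjacent_intervals (hintd x _ _) (hintd x _ _)]
    have h2 : (∫ s in a x..x, (f (x, s) - f (t, s)))
        = (∫ s in a x..x, f (x, s)) - ∫ s in a x..x, f (t, s) :=
      integral_sub (hint x _ _) (hint t _ _)
    simp only [hg₁, hg₂, hg₃]
    rw [show (∫ s in a x..a t, (f (x, s) - f (t, s)))
        + ∫ s in t..x, (f (x, s) - f (t, s))
        = ((∫ s in a x..a t, (f (x, s) - f (t, s)))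
          + (∫ s in a t..t, (f (x, s) - f (t, s)))
          + (∫ s in t..x, (f (x, s) - f (t, s))))
          - ∫ s in a t..t, (f (x, s) - f (t, s)) by abel]
    rw [h1, h2]; abel
  -- derivative of g₁
  have hG : ∀ u : ℝ, HasDerivAt (fun v => ∫ s in (0:ℝ)..v, f (t, s)) (f (t, u)) u :=
    fun u => ((hcx t).integral_hasStrictDerivAt 0 u).hasDerivAt
  have hg1fun : ∀ x, g₁ x = (∫ s in (0:ℝ)..x, f (t, s)) - ∫ s in (0:ℝ)..(a x), f (t, s) :=
    fun x => (integral_interval_sub_left (hint t 0 x) (hint t 0 (a x))).symm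
  have hd1 : HasDerivAt g₁ (f (t, t) - a' • f (t, a t)) t := by
    have h := (hG t).sub ((hG (a t)).scomp t ha)
    exact h.congr_of_eventuallyEq (Filter.Eventually.of_forall hg1fun)
  -- derivative of g₂
  have hd2 : HasDerivAt g₂ (∫ s in a t..t, df (t, s)) t := by
    have h := (paramDeriv f df hf hdf hd (a t) t t).sub_const (∫ s in a t..t, f (t, s))
    refine h.congr_of_eventuallyEq (Filter.Eventually.of_forall fun x => ?_)
    exact integral_sub (hint x _ _) (hint t _ _)
  -- derivative of g₃ is zero
  have hd3 : HasDerivAt g₃ 0 t := by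
    rw [hasDerivAt_iff_isLittleO]
    have hg₃t : g₃ t = 0 := by simp [hg₃]
    simp only [hg₃t, smul_zero, sub_zero]
    rw [isLittleO_iff]
    intro c hc
    set m : ℝ := min (a t) t - 2 with hm
    set M : ℝ := max (a t) t + 2 with hM
    have hScomp : IsCompact (Icc (t - 1) (t + 1) ×ˢ Icc m M) :=
      isCompact_Icc.prod isCompact_Icc
    have huc := hScomp.uniformContinuousOn_of_continuous hf.continuousOn
    set ε : ℝ := c / (|a'| + 2) with hε
    have hεpos : 0 < ε := div_pos hc (by positivity)
    obtain ⟨δ, hδpos, hδ⟩ := Metric.uniformContinuousOn_iff.1 huc ε hεpos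
    have haO : ∀ᶠ x in nhds t, |a x - a t| ≤ (|a'| + 1) * |x - t| := by
      have h1 := (hasDerivAt_iff_isLittleO.1 ha).def one_pos
      filter_upwards [h1] with x hx
      have hx' : |a x - a t - (x - t) * a'| ≤ |x - t| := by
        simpa [Real.norm_eq_abs, smul_eq_mul] using hx
      calc |a x - a t| = |(a x - a t - (x - t) * a') + (x - t) * a'| := by ring_nf
        _ ≤ |a x - a t - (x - t) * a'| + |(x - t) * a'| := abs_add_le _ _
        _ ≤ |x - t| + |x - t| * |a'| := by
            rw [abs_mul]; exact add_le_add hx' le_rfl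
        _ = (|a'| + 1) * |x - t| := by ring
    have hone : (1:ℝ) ≤ |a'| + 1 := by linarith [abs_nonneg a']
    have hsmall : ∀ᶠ x in nhds t, |x - t| < min δ 1 / (|a'| + 1) := by
      have htend : Tendsto (fun x : ℝ => |x - t|) (nhds t) (nhds |t - t|) :=
        ((continuous_id.sub continuous_const).abs).continuousAt
      simp only [sub_self, abs_zero] at htend
      exact htend.eventually_lt_const (div_pos (lt_min hδpos one_pos) (by positivity))
    filter_upwards [haO, hsmall] with x hax hx
    have hxt : |x - t| < min δ 1 :=
      hx.trans_le (div_le_self (le_of_lt (lt_min hδpos one_pos)) hone)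
    have haxt : |a x - a t| < min δ 1 := by
      calc |a x - a t| ≤ (|a'| + 1) * |x - t| := hax
        _ < (|a'| + 1) * (min δ 1 / (|a'| + 1)) := by
            exact mul_lt_mul_of_pos_left hx (by positivity)
        _ = min δ 1 := by field_simp
    have hxt1 : |x - t| ≤ 1 := (hxt.trans_le (min_le_right _ _)).le
    have haxt1 : |a x - a t| ≤ 1 := (haxt.trans_le (min_le_right _ _)).le
    have hxtδ : |x - t| < δ := hxt.trans_le (min_le_left _ _)
    -- memberships
    have hxmem : x ∈ Icc (t - 1) (t + 1) := by
      rw [mem_Icc]; constructor <;> [linarith [abs_le.1 hxt1]; linarith [(abs_le.1 hxt1).2]]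
    have htmem : t ∈ Icc (t - 1) (t + 1) := by
      rw [mem_Icc]; constructor <;> linarith
    have hatmem : a t ∈ Icc m M := by
      rw [mem_Icc, hm, hM]
      constructor
      · have := min_le_left (a t) t; linarith
      · have := le_max_left (a t) t; linarith
    have haxmem : a x ∈ Icc m M := by
      rw [mem_Icc, hm, hM]
      have h1 := (abs_le.1 haxt1).1
      have h2 := (abs_le.1 haxt1).2
      have := min_le_left (a t) t
      have := le_max_left (a t) t
      constructor <;> linarith
    have htmem' : t ∈ Icc m M := by
      rw [mem_Icc, hm, hM]
      have := min_le_right (a t) t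
      have := le_max_right (a t) t
      constructor <;> linarith
    have hxmem' : x ∈ Icc m M := by
      rw [mem_Icc, hm, hM]
      have h1 := (abs_le.1 hxt1).1
      have h2 := (abs_le.1 hxt1).2
      have := min_le_right (a t) t
      have := le_max_right (a t) t
      constructor <;> linarith
    -- the uniform bound on the integrand
    have hbnd : ∀ s ∈ Icc m M, ‖f (x, s) - f (t, s)‖ ≤ ε := by
      intro s hs
      have hmem1 : (x, s) ∈ Icc (t - 1) (t + 1) ×ˢ Icc m M := ⟨hxmem, hs⟩
      have hmem2 : (t, s) ∈ Icc (t - 1) (t + 1) ×ˢ Icc m M := ⟨htmem, hs⟩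
      have hdist : dist (x, s) ((t, s) : ℝ × ℝ) < δ := by
        rw [Prod.dist_eq]
        simp only [dist_self]
        rw [max_eq_left dist_nonneg, Real.dist_eq]
        exact hxtδ
      have := hδ (x, s) hmem1 (t, s) hmem2 hdist
      rw [dist_eq_norm] at this
      exact this.le
    have hsub1 : uIoc (a x) (a t) ⊆ Icc m M :=
      (uIoc_subset_uIcc).trans (uIcc_subset_Icc haxmem hatmem)
    have hsub2 : uIoc t x ⊆ Icc m M :=
      (uIoc_subset_uIcc).trans (uIcc_subset_Icc htmem' hxmem')
    have hb1 : ‖∫ s in a x..a t, (f (x, s) - f (t, s))‖ ≤ ε * |a t - a x| :=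
      intervalIntegral.norm_integral_le_of_norm_le_const
        (fun s hs => hbnd s (hsub1 hs))
    have hb2 : ‖∫ s in t..x, (f (x, s) - f (t, s))‖ ≤ ε * |x - t| :=
      intervalIntegral.norm_integral_le_of_norm_le_const
        (fun s hs => hbnd s (hsub2 hs))
    have hfinal : ‖g₃ x‖ ≤ c * ‖x - t‖ := by
      calc ‖g₃ x‖ ≤ ‖∫ s in a x..a t, (f (x, s) - f (t, s))‖
          + ‖∫ s in t..x, (f (x, s) - f (t, s))‖ := norm_add_le _ _
        _ ≤ ε * |a t - a x| + ε * |x - t| := add_le_add hb1 hb2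
        _ = ε * (|a x - a t| + |x - t|) := by rw [abs_sub_comm (a t) (a x)]; ring
        _ ≤ ε * ((|a'| + 1) * |x - t| + |x - t|) := by
            refine mul_le_mul_of_nonneg_left ?_ hεpos.le
            exact add_le_add hax le_rfl
        _ = ε * (|a'| + 2) * |x - t| := by ring
        _ = c * |x - t| := by rw [hε, div_mul_cancel₀]; positivity
        _ = c * ‖x - t‖ := by rw [Real.norm_eq_abs]
    simpa using hfinal
  have hsum := (hd1.add hd2).add hd3
  rw [add_zero] at hsum
  exact hsum.congr_of_eventuallyEq (Filter.Eventually.of_forall hdecomp)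

/-- Leibniz-type identity for the derivative of
`t ↦ ∫_{t-τ}^t ∫_s^t p(t,l) dl ds` where `p : ℝ × ℝ → ℝⁿ` is continuous and
C¹ in its first argument (with partial derivative `dp`). -/
theorem stmt0 {n : ℕ} (p dp : ℝ × ℝ → EuclideanSpace ℝ (Fin n))
    (hp : Continuous p) (hdp : Continuous dp)
    (hderiv : ∀ t l : ℝ, HasDerivAt (fun t' => p (t', l)) (dp (t, l)) t)
    (τ : ℝ) (hτ : 0 < τ) (t : ℝ) :
    HasDerivAt (fun t' => ∫ s in (t' - τ)..t', ∫ l in s..t', p (t', l))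
      (τ • p (t, t) - (∫ l in (t - τ)..t, p (t, l))
        + ∫ s in (t - τ)..t, ∫ l in s..t, dp (t, l)) t := by
  -- primitives
  set P : ℝ × ℝ → EuclideanSpace ℝ (Fin n) := fun z => ∫ l in (0:ℝ)..z.2, p (z.1, l) with hP
  set Pd : ℝ × ℝ → EuclideanSpace ℝ (Fin n) := fun z => ∫ l in (0:ℝ)..z.2, dp (z.1, l) with hPd
  have hPcont : Continuous P := primCont p hp 0
  have hPdcont : Continuous Pd := primCont dp hdp 0
  have hcontp : ∀ x : ℝ, Continuous fun l => p (x, l) :=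
    fun x => hp.comp (Continuous.prodMk_right x)
  have hcontdp : ∀ x : ℝ, Continuous fun l => dp (x, l) :=
    fun x => hdp.comp (Continuous.prodMk_right x)
  have hintp : ∀ x u v : ℝ, IntervalIntegrable (fun l => p (x, l)) volume u v :=
    fun x u v => (hcontp x).intervalIntegrable u v
  have hintdp : ∀ x u v : ℝ, IntervalIntegrable (fun l => dp (x, l)) volume u v :=
    fun x u v => (hcontdp x).intervalIntegrable u v
  have hPd' : ∀ x s : ℝ, HasDerivAt (fun x' => P (x', s)) (Pd (x, s)) x :=
    fun x s => paramDeriv p dp hp hdp hderiv 0 s x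
  -- derivative of A : x ↦ ∫_0^x p(x,l) dl
  have hA := keyDeriv p dp hp hdp hderiv (fun _ => (0:ℝ)) 0 t (hasDerivAt_const t 0)
  rw [zero_smul, sub_zero] at hA
  -- derivative of B : x ↦ ∫_{x-τ}^x P(x,s) ds
  have hB := keyDeriv P Pd hPcont hPdcont hPd' (fun x => x - τ) 1 t
    ((hasDerivAt_id t).sub_const τ)
  rw [one_smul] at hB
  -- the function equals τ • A - B
  have hfun : ∀ x : ℝ, (∫ s in (x - τ)..x, ∫ l in s..x, p (x, l))
      = τ • (∫ s in (fun _ => (0:ℝ)) x..x, p (x, s)) - ∫ s in (x - τ)..x, P (x, s) := by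
    intro x
    have h1 : (∫ s in (x - τ)..x, ∫ l in s..x, p (x, l))
        = ∫ s in (x - τ)..x, ((∫ l in (0:ℝ)..x, p (x, l)) - P (x, s)) := by
      refine integral_congr fun s _ => ?_
      exact (integral_interval_sub_left (hintp x 0 x) (hintp x 0 s)).symm
    have hiP : IntervalIntegrable (fun s => P (x, s)) volume (x - τ) x :=
      (hPcont.comp (Continuous.prodMk_right x)).intervalIntegrable _ _
    rw [h1, integral_sub intervalIntegrable_const hiP,
      intervalIntegral.integral_const, sub_sub_cancel]
  have hcomb := (hA.const_smul τ).sub hB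
  have hF := hcomb.congr_of_eventuallyEq (Filter.Eventually.of_forall hfun)
  refine hF.congr_deriv ?_
  -- identify the derivative values
  have e1 : (∫ l in (t - τ)..t, p (t, l)) = P (t, t) - P (t, t - τ) :=
    (integral_interval_sub_left (hintp t 0 t) (hintp t 0 (t - τ))).symm
  have e2 : (∫ s in (t - τ)..t, ∫ l in s..t, dp (t, l))
      = τ • (∫ l in (0:ℝ)..t, dp (t, l)) - ∫ s in (t - τ)..t, Pd (t, s) := by
    have h1 : (∫ s in (t - τ)..t, ∫ l in s..t, dp (t, l))
        = ∫ s in (t - τ)..t, ((∫ l in (0:ℝ)..t, dp (t, l)) - Pd (t, s)) := by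
      refine integral_congr fun s _ => ?_
      exact (integral_interval_sub_left (hintdp t 0 t) (hintdp t 0 s)).symm
    have hiPd : IntervalIntegrable (fun s => Pd (t, s)) volume (t - τ) t :=
      (hPdcont.comp (Continuous.prodMk_right t)).intervalIntegrable _ _
    rw [h1, integral_sub intervalIntegrable_const hiPd,
      intervalIntegral.integral_const, sub_sub_cancel]
  have hPtt : P (t, t) = ∫ l in (0:ℝ)..t, p (t, l) := rfl
  rw [e1, e2, smul_add]
  simp only [hP, hPd]
  abel
end

section
/- Let p: ℝ → ℝ be continuous with |p(l)| ≤ p_max for all l, and T > 0 satisfy ∫_{kT}^{(k+1)T} p(r) dr = 0 for all k ∈ ℤ. Then for all α > 0 and all t with αt − α ≥ 0: (i) |∫_{t-1}^t p(αl) dl| ≤ 2 T p_max / α, and (ii) |∫_{t-1}^t (∫_s^t p(αl) dl) ds| ≤ 2 T p_max / α. -/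
open intervalIntegral MeasureTheory

/-- bounds `|∫_{t-1}^t p(αl) dl| ≤ 2Tp_max/α` and
`|∫_{t-1}^t ∫_s^t p(αl) dl ds| ≤ 2Tp_max/α` under the zero-mean condition. -/
theorem stmt4 (p : ℝ → ℝ) (hp : Continuous p) (pmax : ℝ)
    (hbound : ∀ l : ℝ, |p l| ≤ pmax) (T : ℝ) (hT : 0 < T)
    (hzero : ∀ k : ℤ, ∫ r in (k * T)..((k + 1) * T), p r = 0)
    (α t : ℝ) (hα : 0 < α) (h : 0 ≤ α * t - α) :
    |∫ l in (t - 1)..t, p (α * l)| ≤ 2 * T * pmax / α ∧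
    |∫ s in (t - 1)..t, ∫ l in s..t, p (α * l)| ≤ 2 * T * pmax / α := by
  have hpmax : 0 ≤ pmax := (abs_nonneg _).trans (hbound 0)
  have hint : ∀ a b : ℝ, IntervalIntegrable p volume a b :=
    fun a b => hp.intervalIntegrable a b
  set F : ℝ → ℝ := fun x => ∫ r in (0:ℝ)..x, p r with hFdef
  have hadj : ∀ a b : ℝ, F a + ∫ r in a..b, p r = F b := by
    intro a b
    exact intervalIntegral.integral_add_adjacent_intervals (hint _ _) (hint _ _)
  have hFk : ∀ k : ℤ, F (k * T) = 0 := by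
    intro k
    induction k using Int.induction_on with
    | zero => simp [hFdef]
    | succ n ih =>
        have h1 := hadj ((n : ℝ) * T) (((n : ℝ) + 1) * T)
        have h2 := hzero n
        push_cast at h1 h2 ih ⊢
        linarith
    | pred n ih =>
        have h1 := hadj ((-(n : ℝ) - 1) * T) ((-(n : ℝ) - 1 + 1) * T)
        have h2 := hzero (-(n : ℤ) - 1)
        push_cast at h1 h2 ih ⊢
        have : (-(n : ℝ) - 1 + 1) * T = -(n : ℝ) * T := by ring
        rw [this] at h1 h2
        linarith
  have hFa : ∀ a : ℝ, |F a| ≤ T * pmax := by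
    intro a
    set c : ℝ := (⌊a / T⌋ : ℝ) * T with hc
    have hc1 : c ≤ a := by
      rw [hc, ← le_div_iff₀ hT]
      exact Int.floor_le (a / T)
    have hc2 : a ≤ c + T := by
      have := Int.lt_floor_add_one (a / T)
      have := (div_lt_iff₀ hT).mp this
      nlinarith
    have hFc : F c = 0 := hFk ⌊a / T⌋
    have key : ‖∫ r in c..a, p r‖ ≤ pmax * |a - c| :=
      intervalIntegral.norm_integral_le_of_norm_le_const (fun x _ => by
        simpa using hbound x)
    rw [Real.norm_eq_abs] at key
    have h3 := hadj c a
    rw [hFc, zero_add] at h3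
    rw [← h3]
    have : |a - c| = a - c := abs_of_nonneg (by linarith)
    rw [this] at key
    nlinarith
  have hAB : ∀ a b : ℝ, |∫ r in a..b, p r| ≤ 2 * T * pmax := by
    intro a b
    have h3 := hadj a b
    have : (∫ r in a..b, p r) = F b - F a := by linarith
    rw [this]
    have := hFa a
    have := hFa b
    calc |F b - F a| ≤ |F b| + |F a| := abs_sub _ _
      _ ≤ 2 * T * pmax := by linarith
  have hsub : ∀ a b : ℝ, |∫ l in a..b, p (α * l)| ≤ 2 * T * pmax / α := by
    intro a b
    rw [intervalIntegral.integral_comp_mul_left p (ne_of_gt hα)]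
    rw [smul_eq_mul, abs_mul, abs_inv, abs_of_pos hα]
    rw [div_eq_inv_mul]
    exact mul_le_mul_of_nonneg_left (hAB _ _) (by positivity)
  refine ⟨hsub _ _, ?_⟩
  have key : ‖∫ s in (t - 1)..t, ∫ l in s..t, p (α * l)‖ ≤
      (2 * T * pmax / α) * |t - (t - 1)| :=
    intervalIntegral.norm_integral_le_of_norm_le_const (fun s _ => by
      simpa using hsub s t)
  rw [Real.norm_eq_abs] at key
  simpa using key
end

section
/- With the notation and assumptions of the friction model: constants k₀, k̄, σ̃₁ > 0, σ̃₂, σ̃₃ ≥ 0, β₁ > 0, β₂ > 0, S := σ̃₁ + (σ̃₂+σ̃₃)β₂, A := 1 + 1/k₀ + (1 + S²/k₀)/σ̃₁, k: [0,∞) → ℝ C¹ with k₀ ≤ k ≤ k̄ and k' ≤ 0, μ: ℝ → [0,∞) continuous, sat(ξ) := tanh(β₂ ξ), and V(x,t) := A(k(t)x₁² + x₂²) + x₁x₂. Then along the system ẋ₁ = x₂, ẋ₂ = −σ̃₁ x₂ − (σ̃₂ + σ̃₃ e^{−β₁ μ(x₂)}) sat(x₂) − k(t)x₁, the derivative V_t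 + V_x · f̄(x,t) is at most −b(x₁² + x₂²) for all x ∈ ℝ², t ≥ 0, where b := min{k₀/2, A σ̃₁ − 1/2}. -/
lemma sinh_le_mul_cosh {y : ℝ} (hy : 0 ≤ y) : Real.sinh y ≤ y * Real.cosh y := by
  have h : ∀ u : ℝ, HasDerivAt (fun s => s * Real.cosh s - Real.sinh s)
      (1 * Real.cosh u + u * Real.sinh u - Real.cosh u) u := fun u =>
    ((hasDerivAt_id u).mul (Real.hasDerivAt_cosh u)).sub (Real.hasDerivAt_sinh u)
  have mono : MonotoneOn (fun s => s * Real.cosh s - Real.sinh s) (Set.Ici (0:ℝ)) := by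
    apply monotoneOn_of_deriv_nonneg (convex_Ici 0)
    · exact ((continuous_id.mul Real.continuous_cosh).sub Real.continuous_sinh).continuousOn
    · intro u hu; exact (h u).differentiableAt.differentiableWithinAt
    · intro u hu
      rw [interior_Ici] at hu
      rw [(h u).deriv]
      have : 0 ≤ Real.sinh u := Real.sinh_nonneg_iff.mpr hu.le
      nlinarith [(Set.mem_Ioi.mp hu).le]
  have := mono (Set.self_mem_Ici) (Set.mem_Ici.mpr hy) hy
  simpa using this

lemma tanh_le_self {y : ℝ} (hy : 0 ≤ y) : Real.tanh y ≤ y := by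
  rw [Real.tanh_eq_sinh_div_cosh, div_le_iff₀ (Real.cosh_pos y)]
  exact sinh_le_mul_cosh hy

lemma tanh_nonneg' {y : ℝ} (hy : 0 ≤ y) : 0 ≤ Real.tanh y := by
  rw [Real.tanh_eq_sinh_div_cosh]
  exact div_nonneg (Real.sinh_nonneg_iff.mpr hy) (Real.cosh_pos y).le

lemma tanh_facts (β₂ ξ : ℝ) (hβ : 0 < β₂) :
    0 ≤ ξ * Real.tanh (β₂ * ξ) ∧ |Real.tanh (β₂ * ξ)| ≤ β₂ * |ξ| := by
  rcases le_or_gt 0 ξ with h | h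
  · have h0 : 0 ≤ β₂ * ξ := mul_nonneg hβ.le h
    have h1 := tanh_nonneg' h0
    have h2 := tanh_le_self h0
    exact ⟨mul_nonneg h h1, by rw [abs_of_nonneg h1, abs_of_nonneg h]; linarith⟩
  · have h0 : 0 ≤ β₂ * (-ξ) := mul_nonneg hβ.le (by linarith)
    have h1 := tanh_nonneg' h0
    have h2 := tanh_le_self h0
    have he : Real.tanh (β₂ * ξ) = -Real.tanh (β₂ * (-ξ)) := by
      rw [← Real.tanh_neg]; ring_nf
    rw [he]
    constructor
    · have : 0 ≤ (-ξ) * Real.tanh (β₂ * (-ξ)) := mul_nonneg (by linarith) h1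
      nlinarith
    · rw [abs_neg, abs_of_nonneg h1, abs_of_neg h]; linarith



set_option maxHeartbeats 1000000 in
/-- decay of the friction-model Lyapunov function
`V(x,t) = A(k(t)x₁² + x₂²) + x₁x₂` along
`ẋ₁ = x₂, ẋ₂ = −σ̃₁x₂ − (σ̃₂ + σ̃₃ e^{−β₁μ(x₂)}) tanh(β₂x₂) − k(t)x₁`.
Here `V_t + V_x·f̄ = A k'(t) x₁² + (2A k(t) x₁ + x₂)·x₂ + (2A x₂ + x₁)·f̄₂`. -/
theorem stmt7 (k₀ k₁ σ₁ σ₂ σ₃ β₁ β₂ : ℝ)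
    (hk₀ : 0 < k₀) (hk₁ : 0 < k₁) (hσ₁ : 0 < σ₁) (hσ₂ : 0 ≤ σ₂) (hσ₃ : 0 ≤ σ₃)
    (hβ₁ : 0 < β₁) (hβ₂ : 0 < β₂)
    (S A b : ℝ) (hS : S = σ₁ + (σ₂ + σ₃) * β₂)
    (hA : A = 1 + 1 / k₀ + (1 + S ^ 2 / k₀) / σ₁)
    (hb : b = min (k₀ / 2) (A * σ₁ - 1 / 2))
    (k : ℝ → ℝ) (hkC1 : ContDiff ℝ 1 k)
    (hkb : ∀ t : ℝ, 0 ≤ t → k₀ ≤ k t ∧ k t ≤ k₁)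
    (hk' : ∀ t : ℝ, 0 ≤ t → deriv k t ≤ 0)
    (μ : ℝ → ℝ) (hμc : Continuous μ) (hμ : ∀ ξ : ℝ, 0 ≤ μ ξ)
    (f₂ : ℝ × ℝ → ℝ → ℝ)
    (hf₂ : ∀ (x : ℝ × ℝ) (t : ℝ),
      f₂ x t = -σ₁ * x.2 - (σ₂ + σ₃ * Real.exp (-β₁ * μ x.2)) *
        Real.tanh (β₂ * x.2) - k t * x.1)
    (x : ℝ × ℝ) (t : ℝ) (ht : 0 ≤ t) :
    A * deriv k t * x.1 ^ 2 + (2 * A * k t * x.1 + x.2) * x.2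
        + (2 * A * x.2 + x.1) * f₂ x t
      ≤ -b * (x.1 ^ 2 + x.2 ^ 2) := by
  rw [hf₂]
  set T := Real.tanh (β₂ * x.2) with hT
  set c := σ₂ + σ₃ * Real.exp (-β₁ * μ x.2) with hc
  obtain ⟨hTa, hTb⟩ := tanh_facts β₂ x.2 hβ₂
  rw [← hT] at hTa hTb
  have hexp : Real.exp (-β₁ * μ x.2) ≤ 1 := by
    apply Real.exp_le_one_iff.mpr
    have := hμ x.2
    nlinarith
  have hc0 : 0 ≤ c := by positivity
  have hc1 : c ≤ σ₂ + σ₃ := by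
    have : σ₃ * Real.exp (-β₁ * μ x.2) ≤ σ₃ * 1 := by
      apply mul_le_mul_of_nonneg_left hexp hσ₃
    rw [hc]; linarith
  have hS0 : σ₁ ≤ S := by
    rw [hS]; nlinarith
  have hA1 : 1 ≤ A := by
    rw [hA]
    have h1 : 0 ≤ 1 / k₀ := by positivity
    have h2 : 0 ≤ (1 + S ^ 2 / k₀) / σ₁ := by positivity
    linarith [h2]
  have hkt := (hkb t ht).1
  have hk't := hk' t ht
  -- key bounds
  have h4 : -(c * (x.1 * T)) ≤ (σ₂ + σ₃) * β₂ * (|x.1| * |x.2|) := by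
    have habs : |c * (x.1 * T)| ≤ (σ₂ + σ₃) * β₂ * (|x.1| * |x.2|) := by
      rw [abs_mul, abs_mul, abs_of_nonneg hc0]
      have h1 : c * (|x.1| * |T|) ≤ (σ₂ + σ₃) * (|x.1| * (β₂ * |x.2|)) := by
        apply mul_le_mul hc1 (mul_le_mul_of_nonneg_left hTb (abs_nonneg _))
          (by positivity) (by linarith)
      calc c * (|x.1| * |T|) ≤ (σ₂ + σ₃) * (|x.1| * (β₂ * |x.2|)) := h1
        _ = (σ₂ + σ₃) * β₂ * (|x.1| * |x.2|) := by ring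
    linarith [neg_abs_le (c * (x.1 * T))]
  have h5 : S * (|x.1| * |x.2|) ≤ k₀ / 2 * x.1 ^ 2 + S ^ 2 / (2 * k₀) * x.2 ^ 2 := by
    have hsq := sq_nonneg (k₀ * |x.1| - S * |x.2|)
    have e1 : |x.1| ^ 2 = x.1 ^ 2 := sq_abs _
    have e2 : |x.2| ^ 2 = x.2 ^ 2 := sq_abs _
    rw [← sub_nonneg]
    have expand : k₀ / 2 * x.1 ^ 2 + S ^ 2 / (2 * k₀) * x.2 ^ 2 - S * (|x.1| * |x.2|)
        = (k₀ ^ 2 * x.1 ^ 2 + S ^ 2 * x.2 ^ 2 - 2 * k₀ * (S * (|x.1| * |x.2|))) / (2 * k₀) := by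
      field_simp
    rw [expand]
    apply div_nonneg _ (by linarith)
    nlinarith [hsq, e1, e2]
  have hσx : -(σ₁ * (x.1 * x.2)) ≤ σ₁ * (|x.1| * |x.2|) := by
    have h1 : -(x.1 * x.2) ≤ |x.1| * |x.2| := by rw [← abs_mul x.1 x.2]; exact neg_le_abs _
    have h2 := mul_le_mul_of_nonneg_left h1 hσ₁.le
    linarith [h2]
  have hAσ : 1 / 2 + S ^ 2 / (2 * k₀) ≤ A * σ₁ := by
    have hAeq : A * σ₁ = σ₁ + σ₁ / k₀ + (1 + S ^ 2 / k₀) := by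
      rw [hA]; field_simp
    rw [hAeq]
    have h1 : 0 ≤ σ₁ / k₀ := by positivity
    have h2 : S ^ 2 / (2 * k₀) ≤ S ^ 2 / k₀ := by
      apply div_le_div_of_nonneg_left (sq_nonneg S) hk₀; linarith
    linarith [h2]
  have hb1 : b ≤ k₀ / 2 := hb ▸ min_le_left _ _
  have hb2 : b ≤ A * σ₁ - 1 / 2 := hb ▸ min_le_right _ _
  have hderiv : A * deriv k t * x.1 ^ 2 ≤ 0 := by
    have : A * deriv k t ≤ 0 := mul_nonpos_of_nonneg_of_nonpos (by linarith) hk't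
    exact mul_nonpos_of_nonpos_of_nonneg this (sq_nonneg _)
  have hAcT : 0 ≤ A * (c * (x.2 * T)) := by positivity
  have hS' : (σ₂ + σ₃) * β₂ * (|x.1| * |x.2|) = (S - σ₁) * (|x.1| * |x.2|) := by
    rw [hS]; ring
  have p1 : b * x.1 ^ 2 ≤ k₀ / 2 * x.1 ^ 2 := mul_le_mul_of_nonneg_right hb1 (sq_nonneg x.1)
  have p2 : b * x.2 ^ 2 ≤ (A * σ₁ - 1 / 2) * x.2 ^ 2 :=
    mul_le_mul_of_nonneg_right hb2 (sq_nonneg x.2)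
  have p3 : (1 / 2 + S ^ 2 / (2 * k₀)) * x.2 ^ 2 ≤ A * σ₁ * x.2 ^ 2 :=
    mul_le_mul_of_nonneg_right hAσ (sq_nonneg x.2)
  have p4 : k₀ * x.1 ^ 2 ≤ k t * x.1 ^ 2 := mul_le_mul_of_nonneg_right hkt (sq_nonneg x.1)
  nlinarith [p1, p2, p3, p4, hS', h4, h5, hσx, hderiv, hAcT]
end

section
/- Let m: ℝ → ℝⁿ be continuous with |m(t)| = 1 for all t, and suppose there are constants α', β', c̃ > 0 such that α' I ≤ ∫_t^{t+c̃} m(τ)m(τ)ᵀ dτ ≤ β' I for all t (in the positive semidefinite order). Let f* < 0 and set κ := c̃/(2|f*|) + c̃⁴|f*|/(4α') and P(t) := κ I + ∫_{t−c̃}^t ∫_s^t m(l)m(l)ᵀ dl ds. Then for V(x,t) := xᵀ P(t) x, along the system ẋ = f* m(t)m(t)ᵀ x, the derivative satisfies V_t(x,t) + V_x(x,t)·(f* m(t)m(t)ᵀ x) ≤ −(α'/2)|x|² for all x ∈ ℝⁿ and t ∈ ℝ. -/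
open scoped RealInnerProductSpace

set_option maxHeartbeats 1000000 in
/-- for `V(x,t) = xᵀP(t)x` with
`P(t) = κI + ∫_{t−c̃}^t ∫_s^t m(l)m(l)ᵀ dl ds`, along `ẋ = f* m(t)m(t)ᵀ x` we have
`V_t + V_x·f ≤ −(α'/2)|x|²`.  Here `xᵀ m(l)m(l)ᵀ x = ⟪m l, x⟫²`, and
`V_t + V_x·(f*⟪m t,x⟫ m t) = c̃⟪m t,x⟫² − ∫_{t−c̃}^t ⟪m l,x⟫² dl
 + 2f*κ⟪m t,x⟫² + 2f*⟪m t,x⟫ ∫_{t−c̃}^t ∫_s^t ⟪m l,x⟫⟪m l,m t⟫ dl ds`. -/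
theorem stmt8 {n : ℕ} (m : ℝ → EuclideanSpace ℝ (Fin n))
    (hm : Continuous m) (hnorm : ∀ t : ℝ, ‖m t‖ = 1)
    (α' β' c' : ℝ) (hα' : 0 < α') (hβ' : 0 < β') (hc' : 0 < c')
    (hlow : ∀ (t : ℝ) (x : EuclideanSpace ℝ (Fin n)),
      α' * ‖x‖ ^ 2 ≤ ∫ τ in t..(t + c'), ⟪m τ, x⟫ ^ 2)
    (hup : ∀ (t : ℝ) (x : EuclideanSpace ℝ (Fin n)),
      (∫ τ in t..(t + c'), ⟪m τ, x⟫ ^ 2) ≤ β' * ‖x‖ ^ 2)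
    (fs : ℝ) (hfs : fs < 0)
    (κ : ℝ) (hκ : κ = c' / (2 * |fs|) + c' ^ 4 * |fs| / (4 * α'))
    (x : EuclideanSpace ℝ (Fin n)) (t : ℝ) :
    c' * ⟪m t, x⟫ ^ 2 - (∫ l in (t - c')..t, ⟪m l, x⟫ ^ 2)
      + 2 * fs * κ * ⟪m t, x⟫ ^ 2
      + 2 * fs * ⟪m t, x⟫ *
        (∫ s in (t - c')..t, ∫ l in s..t, ⟪m l, x⟫ * ⟪m l, m t⟫)
      ≤ -(α' / 2) * ‖x‖ ^ 2 := by
  have hfs' : |fs| = -fs := abs_of_neg hfs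
  set a : ℝ := ⟪m t, x⟫ with ha
  set I₂ : ℝ := ∫ l in (t - c')..t, ⟪m l, x⟫ ^ 2 with hI₂
  set D : ℝ := ∫ s in (t - c')..t, ∫ l in s..t, ⟪m l, x⟫ * ⟪m l, m t⟫ with hD
  clear_value a I₂ D
  -- lower bound on I₂
  have h1 : α' * ‖x‖ ^ 2 ≤ I₂ := by
    rw [hI₂]
    have := hlow (t - c') x
    rwa [sub_add_cancel] at this
  -- bound on inner integrals
  have hinner : ∀ s : ℝ, |∫ l in s..t, ⟪m l, x⟫ * ⟪m l, m t⟫| ≤ ‖x‖ * |t - s| := by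
    intro s
    have := intervalIntegral.norm_integral_le_of_norm_le_const
      (a := s) (b := t) (C := ‖x‖) (f := fun l => ⟪m l, x⟫ * ⟪m l, m t⟫) ?_
    · simpa using this
    · intro l _
      have h1 := abs_real_inner_le_norm (m l) x
      have h2 := abs_real_inner_le_norm (m l) (m t)
      rw [hnorm l, one_mul] at h1
      rw [hnorm l, hnorm t, one_mul] at h2
      have : |⟪m l, x⟫ * ⟪m l, m t⟫| = |⟪m l, x⟫| * |⟪m l, m t⟫| := abs_mul _ _
      rw [Real.norm_eq_abs, this]
      calc |⟪m l, x⟫| * |⟪m l, m t⟫| ≤ ‖x‖ * 1 :=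
            mul_le_mul h1 h2 (abs_nonneg _) (norm_nonneg _)
        _ = ‖x‖ := mul_one _
  -- bound on D
  have h2 : |D| ≤ c' ^ 2 / 2 * ‖x‖ := by
    have hbound : IntervalIntegrable (fun s => ‖x‖ * (t - s)) MeasureTheory.volume (t - c') t :=
      (Continuous.intervalIntegrable (by continuity) _ _)
    have hDle : |D| ≤ |∫ s in (t - c')..t, ‖x‖ * (t - s)| := by
      rw [hD, ← Real.norm_eq_abs]
      refine intervalIntegral.norm_integral_le_abs_of_norm_le ?_ hbound
      refine MeasureTheory.ae_restrict_of_forall_mem measurableSet_uIoc ?_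
      intro s hs
      rw [Set.uIoc_of_le (by linarith) ] at hs
      have hst : s ≤ t := hs.2
      have := hinner s
      rw [abs_of_nonneg (by linarith : (0:ℝ) ≤ t - s)] at this
      simpa using this
    have hcalc : (∫ s in (t - c')..t, ‖x‖ * (t - s)) = c' ^ 2 / 2 * ‖x‖ := by
      rw [intervalIntegral.integral_const_mul]
      have : (∫ s in (t - c')..t, (t - s)) = c' ^ 2 / 2 := by
        have h1 : (∫ s in (t - c')..t, (t - s)) =
            (∫ s in (t - c')..t, t) - ∫ s in (t - c')..t, s := by
          rw [← intervalIntegral.integral_sub] <;>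
            exact Continuous.intervalIntegrable (by continuity) _ _
        rw [h1, intervalIntegral.integral_const, integral_id]
        simp [smul_eq_mul]; ring
      rw [this]; ring
    rw [hcalc] at hDle
    calc |D| ≤ |c' ^ 2 / 2 * ‖x‖| := hDle
      _ = c' ^ 2 / 2 * ‖x‖ := abs_of_nonneg (by positivity)
  -- combine
  have h3 : 2 * fs * a * D ≤ c' ^ 2 * |fs| * |a| * ‖x‖ := by
    calc 2 * fs * a * D ≤ |2 * fs * a * D| := le_abs_self _
      _ = 2 * |fs| * |a| * |D| := by
          rw [abs_mul, abs_mul, abs_mul]; norm_num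
      _ ≤ 2 * |fs| * |a| * (c' ^ 2 / 2 * ‖x‖) := by
          apply mul_le_mul_of_nonneg_left h2 (by positivity)
      _ = c' ^ 2 * |fs| * |a| * ‖x‖ := by ring
  have h4 : c' ^ 2 * |fs| * |a| * ‖x‖ ≤ α' / 2 * ‖x‖ ^ 2 + c' ^ 4 * fs ^ 2 / (2 * α') * a ^ 2 := by
    have hsq : 0 ≤ (α' * ‖x‖ - c' ^ 2 * |fs| * |a|) ^ 2 := sq_nonneg _
    have ha2 : |a| ^ 2 = a ^ 2 := sq_abs a
    have hf2 : |fs| ^ 2 = fs ^ 2 := sq_abs fs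
    rw [← mul_le_mul_iff_right₀ (by positivity : (0:ℝ) < 2 * α')]
    have hα'ne : α' ≠ 0 := ne_of_gt hα'
    have hrhs : 2 * α' * (α' / 2 * ‖x‖ ^ 2 + c' ^ 4 * fs ^ 2 / (2 * α') * a ^ 2)
        = α' ^ 2 * ‖x‖ ^ 2 + c' ^ 4 * fs ^ 2 * a ^ 2 := by
      field_simp
    rw [hrhs]
    have hu : (|fs| * |a|) ^ 2 = fs ^ 2 * a ^ 2 := by rw [mul_pow, sq_abs, sq_abs]
    have hu4 : c' ^ 4 * (|fs| * |a|) ^ 2 = c' ^ 4 * (fs ^ 2 * a ^ 2) := by rw [hu]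
    nlinarith [sq_nonneg (α' * ‖x‖ - c' ^ 2 * (|fs| * |a|)), hu4]
  have hκ2 : c' * a ^ 2 + 2 * fs * κ * a ^ 2 = - (c' ^ 4 * fs ^ 2 / (2 * α')) * a ^ 2 := by
    have hfsne : fs ≠ 0 := ne_of_lt hfs
    have hα'ne : α' ≠ 0 := ne_of_gt hα'
    have e1 : 2 * fs * κ = -c' - c' ^ 4 * fs ^ 2 / (2 * α') := by
      rw [hκ, hfs']
      field_simp
      ring
    rw [e1]
    field_simp
    ring
  linarith [h1, h3, h4, hκ2]
end

section
/- Suppose V ∈ C¹(ℝⁿ × [0,∞); ℝ), W: ℝⁿ × [0,∞) → [0,∞), Θ ∈ C¹(ℝⁿ × [0,∞); ℝ), p: ℝ → ℝ continuous and bounded by p_max, and constants c, T > 0 satisfy: (H1) V_t(x,t) + V_x(x,t)·f(x,t,αt) ≤ −W(x,t) + p(αt)Θ(x,t); (H2) ∫_{kT}^{(k+1)T} p(r) dr = 0 for all k ∈ ℤ; (H3) V(x,t) ≥ c|Θ(x,t)| and W(x,t) ≥ c·max{|Θ(x,t)|, |Θ_t(x,t) + Θ_x(x,t)f(x,t,αt)|},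 all holding for all x ∈ ℝⁿ, t ≥ 0, α > 0. Define U^{[α]}(x,t) := V(x,t) − (∫_{t−1}^t (∫_s^t p(αl) dl) ds) Θ(x,t). Then for every constant α > 8Tp_max/c and every t ≥ 1, along any trajectory of ẋ = f(x,t,αt) the time derivative of U^{[α]}(x(t),t) is at most −W(x(t),t)/2. -/
open intervalIntegral

/-- Theorem: strictification under Assumption H: with
`U^{[α]}(x,t) = V(x,t) − (∫_{t−1}^t ∫_s^t p(αl) dl ds) Θ(x,t)`, for every
`α > 8Tp_max/c` and `t ≥ 1`, the time derivative of `t ↦ U^{[α]}(x(t),t)`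
along a trajectory of `ẋ = f(x,t,αt)` is at most `−W(x(t),t)/2`. -/
theorem stmt10 {n : ℕ}
    (V Θ : EuclideanSpace ℝ (Fin n) × ℝ → ℝ)
    (hV : ContDiff ℝ 1 V) (hΘ : ContDiff ℝ 1 Θ)
    (W : EuclideanSpace ℝ (Fin n) × ℝ → ℝ) (hW : ∀ q, 0 ≤ W q)
    (f : EuclideanSpace ℝ (Fin n) → ℝ → ℝ → EuclideanSpace ℝ (Fin n))
    (hf : Continuous fun q : EuclideanSpace ℝ (Fin n) × ℝ × ℝ =>
      f q.1 q.2.1 q.2.2)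
    (p : ℝ → ℝ) (hp : Continuous p)
    (pmax : ℝ) (hpmax : 0 < pmax) (hpb : ∀ l : ℝ, |p l| ≤ pmax)
    (c T : ℝ) (hc : 0 < c) (hT : 0 < T)
    (H1 : ∀ (x : EuclideanSpace ℝ (Fin n)) (t α : ℝ), 0 ≤ t → 0 < α →
      fderiv ℝ V (x, t) (f x t (α * t), 1) ≤ -W (x, t) + p (α * t) * Θ (x, t))
    (H2 : ∀ k : ℤ, ∫ r in (k * T)..((k + 1) * T), p r = 0)
    (H3a : ∀ (x : EuclideanSpace ℝ (Fin n)) (t : ℝ), 0 ≤ t →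
      c * |Θ (x, t)| ≤ V (x, t))
    (H3b : ∀ (x : EuclideanSpace ℝ (Fin n)) (t α : ℝ), 0 ≤ t → 0 < α →
      c * max (|Θ (x, t)|) (|fderiv ℝ Θ (x, t) (f x t (α * t), 1)|) ≤ W (x, t))
    (α : ℝ) (hα : 8 * T * pmax / c < α)
    (x : ℝ → EuclideanSpace ℝ (Fin n))
    (hx : ∀ t : ℝ, HasDerivAt x (f (x t) t (α * t)) t)
    (t : ℝ) (ht : 1 ≤ t) :
    ∃ d : ℝ,
      HasDerivAt (fun τ =>
          V (x τ, τ) - (∫ s in (τ - 1)..τ, ∫ l in s..τ, p (α * l)) * Θ (x τ, τ))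
        d t ∧ d ≤ -W (x t, t) / 2 := by
  have hα0 : 0 < α := lt_trans (by positivity) hα
  have hpint : ∀ a b : ℝ, IntervalIntegrable p MeasureTheory.volume a b :=
    fun a b => hp.intervalIntegrable a b
  -- integral of p over integer multiples of T vanishes
  have hperN : ∀ (k : ℤ) (j : ℕ), (∫ r in ((k:ℝ) * T)..(((k:ℝ) + j) * T), p r) = 0 := by
    intro k j
    induction j with
    | zero => simp
    | succ j ih =>
      have hsplit := integral_add_adjacent_intervals (a := (k:ℝ)*T)
        (b := ((k:ℝ)+j)*T) (c := ((k:ℝ)+j+1)*T) (f := p)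
        (μ := MeasureTheory.volume) (hpint _ _) (hpint _ _)
      have h2 := H2 (k + j)
      push_cast at h2
      have : (∫ r in (((k:ℝ)+j) * T)..(((k:ℝ)+j+1) * T), p r) = 0 := h2
      have hfin : (∫ r in ((k:ℝ) * T)..(((k:ℝ)+j+1) * T), p r) = 0 := by
        rw [← hsplit, ih, this, add_zero]
      push_cast
      convert hfin using 3
      ring
  have hper : ∀ k m : ℤ, k ≤ m → (∫ r in ((k:ℝ) * T)..((m:ℝ) * T), p r) = 0 := by
    intro k m hkm
    have hj : ((m - k).toNat : ℤ) = m - k := Int.toNat_of_nonneg (by omega)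
    have := hperN k (m - k).toNat
    have hcast : ((k:ℝ) + ((m - k).toNat : ℕ)) = (m:ℝ) := by
      have : (((m - k).toNat : ℤ) : ℝ) = ((m : ℝ) - k) := by
        rw [hj]; push_cast; ring
      push_cast at this ⊢
      linarith
    rwa [hcast] at this
  -- bound on any integral of p: |∫_a^b p| ≤ 2 T pmax
  have keyle : ∀ a b : ℝ, a ≤ b → |∫ r in a..b, p r| ≤ 2 * T * pmax := by
    intro a b hab
    have habs : ∀ u v : ℝ, |∫ r in u..v, p r| ≤ pmax * |v - u| := by
      intro u v
      have := norm_integral_le_of_norm_le_const (a := u) (b := v) (C := pmax)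
        (f := p) (fun r _ => by rw [Real.norm_eq_abs]; exact hpb r)
      simpa [Real.norm_eq_abs] using this
    set k : ℤ := ⌈a / T⌉ with hk
    set m : ℤ := ⌊b / T⌋ with hm
    have hak : a ≤ (k:ℝ) * T := by
      rw [← div_le_iff₀ hT]; exact Int.le_ceil _
    have hka : (k:ℝ) * T < a + T := by
      have h := Int.ceil_lt_add_one (a / T)
      have h2 : ((k:ℝ) - 1) < a / T := by rw [hk]; push_cast; linarith
      have := (lt_div_iff₀ hT).mp h2
      linarith
    have hmb : (m:ℝ) * T ≤ b := by
      rw [← le_div_iff₀ hT]; exact Int.floor_le _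
    have hbm : b < (m:ℝ) * T + T := by
      have h : b / T < (m:ℝ) + 1 := Int.lt_floor_add_one _
      have := (div_lt_iff₀ hT).mp h
      linarith
    by_cases hkm : k ≤ m
    · have hkmr : (k:ℝ) * T ≤ (m:ℝ) * T := by
        have : (k:ℝ) ≤ m := by exact_mod_cast hkm
        nlinarith
      have hsplit : (∫ r in a..b, p r) =
          (∫ r in a..((k:ℝ)*T), p r) + (∫ r in ((k:ℝ)*T)..((m:ℝ)*T), p r)
            + ∫ r in ((m:ℝ)*T)..b, p r := by
        rw [integral_add_adjacent_intervals (hpint _ _) (hpint _ _),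
          integral_add_adjacent_intervals (hpint _ _) (hpint _ _)]
      rw [hsplit, hper k m hkm, add_zero]
      calc |(∫ r in a..((k:ℝ)*T), p r) + ∫ r in ((m:ℝ)*T)..b, p r|
          ≤ |∫ r in a..((k:ℝ)*T), p r| + |∫ r in ((m:ℝ)*T)..b, p r| := abs_add_le _ _
        _ ≤ pmax * |(k:ℝ)*T - a| + pmax * |b - (m:ℝ)*T| := by
            gcongr <;> exact habs _ _
        _ ≤ 2 * T * pmax := by
            rw [abs_of_nonneg (by linarith), abs_of_nonneg (by linarith)]
            nlinarith
    ·
      have hmk : (m:ℝ) < k := by exact_mod_cast not_le.mp hkm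
      have hmk1 : (m:ℝ) + 1 ≤ k := by
        have : m + 1 ≤ k := by omega
        exact_mod_cast this
      have hba : b - a < T := by nlinarith
      calc |∫ r in a..b, p r| ≤ pmax * |b - a| := habs _ _
        _ ≤ 2 * T * pmax := by
            rw [abs_of_nonneg (by linarith)]
            nlinarith
  have key : ∀ a b : ℝ, |∫ r in a..b, p r| ≤ 2 * T * pmax := by
    intro a b
    rcases le_total a b with h | h
    · exact keyle a b h
    · rw [integral_symm, abs_neg]; exact keyle b a h
  -- scaled integrand
  set pa : ℝ → ℝ := fun l => p (α * l) with hpa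
  have hpac : Continuous pa := hp.comp (continuous_const.mul continuous_id)
  have hpaint : ∀ a b : ℝ, IntervalIntegrable pa MeasureTheory.volume a b :=
    fun a b => hpac.intervalIntegrable a b
  have keya : ∀ a b : ℝ, |∫ l in a..b, pa l| ≤ 2 * T * pmax / α := by
    intro a b
    have : (∫ l in a..b, pa l) = α⁻¹ • ∫ r in (α*a)..(α*b), p r :=
      integral_comp_mul_left p (ne_of_gt hα0)
    rw [this, smul_eq_mul, abs_mul, abs_of_nonneg (inv_nonneg.2 hα0.le),
      div_eq_inv_mul]
    gcongr
    exact key _ _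
  -- primitives
  set G : ℝ → ℝ := fun u => ∫ l in (0:ℝ)..u, pa l with hGdef
  have hG : ∀ u, HasDerivAt G (pa u) u := fun u =>
    (hpac.integral_hasStrictDerivAt 0 u).hasDerivAt
  have hGc : Continuous G := by
    rw [continuous_iff_continuousAt]; exact fun u => (hG u).continuousAt
  have hGsub : ∀ s τ : ℝ, (∫ l in s..τ, pa l) = G τ - G s := fun s τ =>
    (integral_interval_sub_left (hpaint 0 τ) (hpaint 0 s)).symm
  -- rewrite P
  have hPeq : ∀ τ : ℝ, (∫ s in (τ-1)..τ, ∫ l in s..τ, pa l)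
      = G τ - ∫ s in (τ-1)..τ, G s := by
    intro τ
    have : (∫ s in (τ-1)..τ, ∫ l in s..τ, pa l)
        = ∫ s in (τ-1)..τ, (G τ - G s) := by
      apply integral_congr; intro s _; exact hGsub s τ
    rw [this, integral_sub (intervalIntegrable_const) (hGc.intervalIntegrable _ _)]
    simp
  set H : ℝ → ℝ := fun u => ∫ s in (0:ℝ)..u, G s with hHdef
  have hH : ∀ u, HasDerivAt H (G u) u := fun u =>
    (hGc.integral_hasStrictDerivAt 0 u).hasDerivAt
  have hQeq : ∀ τ : ℝ, (∫ s in (τ-1)..τ, G s) = H τ - H (τ-1) := fun τ =>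
    (integral_interval_sub_left (hGc.intervalIntegrable 0 τ)
      (hGc.intervalIntegrable 0 (τ-1))).symm
  -- derivative of P at t
  have hPd : HasDerivAt (fun τ => ∫ s in (τ-1)..τ, ∫ l in s..τ, pa l)
      (pa t - (G t - G (t-1))) t := by
    have h1 : HasDerivAt (fun τ => H τ - H (τ-1)) (G t - G (t-1)) t := by
      have h2 : HasDerivAt (fun τ : ℝ => H (τ-1)) (G (t-1)) t := by
        have := (hH (t-1)).comp t ((hasDerivAt_id t).sub_const 1)
        rw [mul_one] at this
        exact this
      exact (hH t).sub h2
    have h3 : HasDerivAt (fun τ => G τ - (H τ - H (τ-1)))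
        (pa t - (G t - G (t-1))) t := (hG t).sub h1
    apply h3.congr_of_eventuallyEq
    filter_upwards with τ
    rw [hPeq τ, hQeq τ]
  -- derivative of trajectory compositions
  have hxt : HasDerivAt (fun τ => (x τ, τ)) (f (x t) t (α*t), 1) t :=
    (hx t).prodMk (hasDerivAt_id t)
  have hVd := ((hV.differentiable one_ne_zero (x t, t)).hasFDerivAt).comp_hasDerivAt_of_eq t hxt rfl
  have hΘd := ((hΘ.differentiable one_ne_zero (x t, t)).hasFDerivAt).comp_hasDerivAt_of_eq t hxt rfl
  set Pt : ℝ := ∫ s in (t-1)..t, ∫ l in s..t, pa l with hPt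
  set I : ℝ := G t - G (t-1) with hI
  set Θv : ℝ := Θ (x t, t) with hΘv
  set Θd : ℝ := fderiv ℝ Θ (x t, t) (f (x t) t (α*t), 1) with hΘdv
  refine ⟨fderiv ℝ V (x t, t) (f (x t) t (α*t), 1)
      - ((pa t - I) * Θv + Pt * Θd), hVd.sub (hPd.mul hΘd), ?_⟩
  -- estimates
  have ht0 : (0:ℝ) ≤ t := by linarith
  have hIb : |I| ≤ 2 * T * pmax / α := by
    rw [hI, ← hGsub (t-1) t]; exact keya _ _
  have hPb : |Pt| ≤ 2 * T * pmax / α := by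
    rw [hPt]
    have hb : ∀ s ∈ Set.uIoc (t-1) t, ‖∫ l in s..t, pa l‖ ≤ 2 * T * pmax / α := by
      intro s _; rw [Real.norm_eq_abs]; exact keya s t
    have := norm_integral_le_of_norm_le_const hb
    rw [Real.norm_eq_abs] at this
    calc |∫ s in (t-1)..t, ∫ l in s..t, pa l| ≤ 2 * T * pmax / α * |t - (t-1)| := this
      _ = 2 * T * pmax / α := by norm_num
  have h1 := H1 (x t) t α ht0 hα0
  have hWb := H3b (x t) t α ht0 hα0
  have hΘle : |Θv| ≤ W (x t, t) / c := by
    rw [le_div_iff₀ hc, mul_comm]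
    exact le_trans (mul_le_mul_of_nonneg_left (le_max_left _ _) hc.le) hWb
  have hΘdle : |Θd| ≤ W (x t, t) / c := by
    rw [le_div_iff₀ hc, mul_comm]
    exact le_trans (mul_le_mul_of_nonneg_left (le_max_right _ _) hc.le) hWb
  have hBnn : (0:ℝ) ≤ 2 * T * pmax / α := by positivity
  have hIΘ : I * Θv ≤ (2 * T * pmax / α) * (W (x t, t) / c) := by
    calc I * Θv ≤ |I| * |Θv| := (le_abs_self _).trans (abs_mul _ _).le
      _ ≤ _ := mul_le_mul hIb hΘle (abs_nonneg _) hBnn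
  have hPΘ : -(Pt * Θd) ≤ (2 * T * pmax / α) * (W (x t, t) / c) := by
    calc -(Pt * Θd) ≤ |Pt * Θd| := neg_le_abs _
      _ = |Pt| * |Θd| := abs_mul _ _
      _ ≤ _ := mul_le_mul hPb hΘdle (abs_nonneg _) hBnn
  have hαc : 8 * T * pmax < α * c := by
    have := (div_lt_iff₀ hc).mp hα; linarith
  have hBc : 2 * T * pmax / α ≤ c / 4 := by
    rw [div_le_div_iff₀ hα0 (by norm_num : (0:ℝ) < 4)]
    nlinarith
  have hWc : 0 ≤ W (x t, t) / c := div_nonneg (hW _) hc.le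
  have hmul : (2 * T * pmax / α) * (W (x t, t) / c) ≤ W (x t, t) / 4 := by
    calc (2 * T * pmax / α) * (W (x t, t) / c)
        ≤ (c/4) * (W (x t, t) / c) := mul_le_mul_of_nonneg_right hBc hWc
      _ = W (x t, t) / 4 := by field_simp
  rw [← hΘv] at h1
  simp only [hpa]
  nlinarith [h1, hIΘ, hPΘ, hmul, hW (x t, t)]
end
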